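/- If ψ₁ and ψ₂ are continuous solutions of shifted Bellman Equations Tψ₁ + c₁ = ψ₁ and Tψ₂ + c₂ = ψ₂, then c₁ = c₂. -/

import Mathlib

theorem bellman_shift_le
    {X U : Type*} [MetricSpace X] [CompactSpace X] [Nonempty X] [MetricSpace U]
    (Z : Set (X × U)) (hZ : IsCompact Z) (hsec : ∀ x : X, ∃ u : U, (x, u) ∈ Z)
    (f : X × U → X) (hf : ContinuousOn f Z)
    (ℓ : X × U → ℝ) (hℓ : ContinuousOn ℓ Z)
    (T : (X → ℝ) → X → ℝ)
    (hT : ∀ ψ : X → ℝ, ∀ x : X,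
      T ψ x = sInf ((fun u => ℓ (x, u) + ψ (f (x, u))) '' {u : U | (x, u) ∈ Z}))
    (ψ₁ ψ₂ : X → ℝ) (h₁ : Continuous ψ₁) (h₂ : Continuous ψ₂)
    (c₁ c₂ : ℝ)
    (hb₁ : ∀ x, T ψ₁ x + c₁ = ψ₁ x) (hb₂ : ∀ x, T ψ₂ x + c₂ = ψ₂ x) :
    c₂ ≤ c₁ := by
  -- the fiber of Z over x is compact
  have hK : ∀ x : X, IsCompact {u : U | (x, u) ∈ Z} := by
    intro x
    have h1 : IsCompact (Z ∩ (Prod.fst ⁻¹' {x})) :=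
      hZ.inter_right (isClosed_singleton.preimage continuous_fst)
    have h2 : {u : U | (x, u) ∈ Z} = Prod.snd '' (Z ∩ (Prod.fst ⁻¹' {x})) := by
      ext u
      constructor
      · intro hu; exact ⟨(x, u), ⟨hu, rfl⟩, rfl⟩
      · rintro ⟨⟨a, b⟩, ⟨hab, ha⟩, rfl⟩
        simp only [Set.mem_preimage, Set.mem_singleton_iff] at ha
        subst ha; exact hab
    rw [h2]
    exact h1.image continuous_snd
  -- the image sets are compact and nonempty
  have himg : ∀ (ψ : X → ℝ), Continuous ψ → ∀ x : X,
      IsCompact ((fun u => ℓ (x, u) + ψ (f (x, u))) '' {u : U | (x, u) ∈ Z}) := by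
    intro ψ hψ x
    apply (hK x).image_of_continuousOn
    have hmem : ∀ u ∈ {u : U | (x, u) ∈ Z}, (x, u) ∈ Z := fun u hu => hu
    have hcont : Continuous fun u : U => ((x, u) : X × U) :=
      continuous_const.prodMk continuous_id
    exact (hℓ.comp hcont.continuousOn hmem).add
      ((hψ.comp_continuousOn (hf.comp hcont.continuousOn hmem)))
  have hne : ∀ x : X, ∀ (ψ : X → ℝ),
      ((fun u => ℓ (x, u) + ψ (f (x, u))) '' {u : U | (x, u) ∈ Z}).Nonempty := by
    intro x ψ
    obtain ⟨u, hu⟩ := hsec x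
    exact ⟨_, ⟨u, hu, rfl⟩⟩
  -- max point of ψ₁ - ψ₂
  obtain ⟨xs, -, hxs⟩ := isCompact_univ.exists_isMaxOn (Set.univ_nonempty)
    ((h₁.sub h₂).continuousOn)
  have hmax : ∀ y : X, ψ₁ y - ψ₂ y ≤ ψ₁ xs - ψ₂ xs := fun y =>
    hxs (Set.mem_univ y)
  -- key inequality at xs
  have key : T ψ₁ xs ≤ T ψ₂ xs + (ψ₁ xs - ψ₂ xs) := by
    -- the inf for ψ₂ is attained
    have h2c := himg ψ₂ h₂ xs
    have h2n := hne xs ψ₂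
    have hmem2 : sInf ((fun u => ℓ (xs, u) + ψ₂ (f (xs, u))) '' {u : U | (xs, u) ∈ Z}) ∈
        ((fun u => ℓ (xs, u) + ψ₂ (f (xs, u))) '' {u : U | (xs, u) ∈ Z}) :=
      h2c.sInf_mem h2n
    obtain ⟨u, hu, hval⟩ := hmem2
    have h1b : BddBelow ((fun u => ℓ (xs, u) + ψ₁ (f (xs, u))) '' {u : U | (xs, u) ∈ Z}) :=
      (himg ψ₁ h₁ xs).bddBelow
    have hle : T ψ₁ xs ≤ ℓ (xs, u) + ψ₁ (f (xs, u)) := by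
      rw [hT ψ₁ xs]
      exact csInf_le h1b ⟨u, hu, rfl⟩
    calc T ψ₁ xs ≤ ℓ (xs, u) + ψ₁ (f (xs, u)) := hle
      _ = (ℓ (xs, u) + ψ₂ (f (xs, u))) + (ψ₁ (f (xs, u)) - ψ₂ (f (xs, u))) := by ring
      _ ≤ T ψ₂ xs + (ψ₁ xs - ψ₂ xs) := by
          have hval' : ℓ (xs, u) + ψ₂ (f (xs, u)) =
              sInf ((fun u => ℓ (xs, u) + ψ₂ (f (xs, u))) '' {u : U | (xs, u) ∈ Z}) := hval
          rw [hT ψ₂ xs, ← hval']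
          exact add_le_add_right (hmax _) _
  have e1 := hb₁ xs
  have e2 := hb₂ xs
  linarith

/-- All continuous solutions of shifted Bellman Equations share the same shift. -/
theorem shifted_bellman_same_shift
    {X U : Type*} [MetricSpace X] [CompactSpace X] [Nonempty X] [MetricSpace U]
    (Z : Set (X × U)) (hZ : IsCompact Z) (hsec : ∀ x : X, ∃ u : U, (x, u) ∈ Z)
    (f : X × U → X) (hf : ContinuousOn f Z)
    (ℓ : X × U → ℝ) (hℓ : ContinuousOn ℓ Z)
    (T : (X → ℝ) → X → ℝ)
    (hT : ∀ ψ : X → ℝ, ∀ x : X,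
      T ψ x = sInf ((fun u => ℓ (x, u) + ψ (f (x, u))) '' {u : U | (x, u) ∈ Z}))    (ψ₁ ψ₂ : X → ℝ) (h₁ : Continuous ψ₁) (h₂ : Continuous ψ₂)
    (c₁ c₂ : ℝ)
    (hb₁ : ∀ x, T ψ₁ x + c₁ = ψ₁ x) (hb₂ : ∀ x, T ψ₂ x + c₂ = ψ₂ x) :
    c₁ = c₂ := by
  exact le_antisymm
    (bellman_shift_le Z hZ hsec f hf ℓ hℓ T hT ψ₂ ψ₁ h₂ h₁ c₂ c₁ hb₂ hb₁)
    (bellman_shift_le Z hZ hsec f hf ℓ hℓ T hT ψ₁ ψ₂ h₁ h₂ c₁ c₂ hb₁ hb₂)
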